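/- Let a : (0,∞) → [0,∞) be measurable, ω ≥ 0, α ∈ (0,1), and set c_a = ess sup_{0<x≤1} (ω+a(x))^α, assumed finite. Let i ≥ 2 and 1 ≤ r ≤ i−1 be real numbers. Then for every measurable f : (0,∞) → [0,∞), ∫₀^∞ x^r (ω+a(x))^α f(x) dx ≤ c_a ∫₀^∞ x f(x) dx + ( ∫₀^∞ x^{i−1} f(x) dx )^{1−α} ( ∫₀^∞ x^i (ω+a(x)) f(x) dx )^{α}. -/

import Mathlib

open MeasureTheory Set Filter
open scoped ENNReal

/-- the interpolation inequality
`‖f‖^{(α)}_{[r]} ≤ c_a ‖f‖_{[1]} + ‖f‖_{[i−1]}^{1−α} (‖f‖^{(1)}_{[i]})^α`, where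
`c_a = ess sup_{0<x≤1} (ω+a(x))^α`. -/
theorem stmt17 (a : ℝ → ℝ) (ω α i r : ℝ) (f : ℝ → ℝ)
    (ha_meas : Measurable a) (ha_nonneg : ∀ x, 0 ≤ a x)
    (hω : 0 ≤ ω) (hα : α ∈ Set.Ioo (0:ℝ) 1)
    (ha_bdd : Filter.IsBoundedUnder (· ≤ ·)
      (MeasureTheory.ae (volume.restrict (Set.Ioc (0:ℝ) 1)))
      (fun x => (ω + a x) ^ α))
    (hi : 2 ≤ i) (hr1 : 1 ≤ r) (hr2 : r ≤ i - 1)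
    (hf_meas : Measurable f) (hf_nonneg : ∀ x, 0 ≤ f x) :
    ∫⁻ x in Set.Ioi (0:ℝ), ENNReal.ofReal (x ^ r * (ω + a x) ^ α * f x)
      ≤ ENNReal.ofReal
            (essSup (fun x => (ω + a x) ^ α) (volume.restrict (Set.Ioc (0:ℝ) 1))) *
          (∫⁻ x in Set.Ioi (0:ℝ), ENNReal.ofReal (x * f x)) +
        (∫⁻ x in Set.Ioi (0:ℝ), ENNReal.ofReal (x ^ (i - 1) * f x)) ^ (1 - α) *
          (∫⁻ x in Set.Ioi (0:ℝ),
            ENNReal.ofReal (x ^ i * (ω + a x) * f x)) ^ α := by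
  obtain ⟨hα0, hα1⟩ := hα
  set c : ℝ := essSup (fun x => (ω + a x) ^ α) (volume.restrict (Set.Ioc (0:ℝ) 1)) with hc
  have hsplit : Set.Ioc (0:ℝ) 1 ∪ Set.Ioi 1 = Set.Ioi 0 := Set.Ioc_union_Ioi_eq_Ioi zero_le_one
  have hφ : ∫⁻ x in Set.Ioi (0:ℝ), ENNReal.ofReal (x ^ r * (ω + a x) ^ α * f x)
      = (∫⁻ x in Set.Ioc (0:ℝ) 1, ENNReal.ofReal (x ^ r * (ω + a x) ^ α * f x))
        + ∫⁻ x in Set.Ioi (1:ℝ), ENNReal.ofReal (x ^ r * (ω + a x) ^ α * f x) := by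
    rw [← hsplit, lintegral_union measurableSet_Ioi (Set.Ioc_disjoint_Ioi le_rfl)]
  rw [hφ]
  have h1 : (∫⁻ x in Set.Ioc (0:ℝ) 1, ENNReal.ofReal (x ^ r * (ω + a x) ^ α * f x))
      ≤ ENNReal.ofReal c * ∫⁻ x in Set.Ioi (0:ℝ), ENNReal.ofReal (x * f x) := by
    have key : (∫⁻ x in Set.Ioc (0:ℝ) 1, ENNReal.ofReal (x ^ r * (ω + a x) ^ α * f x))
        ≤ ∫⁻ x in Set.Ioc (0:ℝ) 1, ENNReal.ofReal c * ENNReal.ofReal (x * f x) := by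
      refine lintegral_mono_ae ?_
      filter_upwards [ae_le_essSup ha_bdd, ae_restrict_mem measurableSet_Ioc] with x hx hmem
      have hx0 : 0 < x := hmem.1
      have hc0 : 0 ≤ c := le_trans (Real.rpow_nonneg (add_nonneg hω (ha_nonneg x)) α) hx
      have hxr : x ^ r ≤ x := by
        calc x ^ r ≤ x ^ (1:ℝ) :=
          Real.rpow_le_rpow_of_exponent_ge hx0 hmem.2 hr1
        _ = x := Real.rpow_one x
      rw [← ENNReal.ofReal_mul hc0]
      refine ENNReal.ofReal_le_ofReal ?_
      calc x ^ r * (ω + a x) ^ α * f x ≤ x * c * f x := by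
            apply mul_le_mul _ le_rfl (hf_nonneg x) (by nlinarith [hf_nonneg x])
            exact mul_le_mul hxr hx (Real.rpow_nonneg (add_nonneg hω (ha_nonneg x)) α) hx0.le
        _ = c * (x * f x) := by ring
    refine key.trans ?_
    rw [lintegral_const_mul' _ _ ENNReal.ofReal_ne_top]
    exact mul_le_mul_right (lintegral_mono_set Set.Ioc_subset_Ioi_self) _
  have hGm : Measurable fun x : ℝ => ENNReal.ofReal (x ^ (i - 1) * f x) :=
    ((measurable_id.pow measurable_const).mul hf_meas).ennreal_ofReal
  have hHm : Measurable fun x : ℝ => ENNReal.ofReal (x ^ i * (ω + a x) * f x) :=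
    (((measurable_id.pow measurable_const).mul (measurable_const.add ha_meas)).mul hf_meas).ennreal_ofReal
  have h2 : (∫⁻ x in Set.Ioi (1:ℝ), ENNReal.ofReal (x ^ r * (ω + a x) ^ α * f x))
      ≤ (∫⁻ x in Set.Ioi (0:ℝ), ENNReal.ofReal (x ^ (i - 1) * f x)) ^ (1 - α) *
        (∫⁻ x in Set.Ioi (0:ℝ), ENNReal.ofReal (x ^ i * (ω + a x) * f x)) ^ α := by
    set G : ℝ → ℝ≥0∞ := fun x => ENNReal.ofReal (x ^ (i - 1) * f x) with hG
    set H : ℝ → ℝ≥0∞ := fun x => ENNReal.ofReal (x ^ i * (ω + a x) * f x) with hH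
    have hstep : (∫⁻ x in Set.Ioi (1:ℝ), ENNReal.ofReal (x ^ r * (ω + a x) ^ α * f x))
        ≤ ∫⁻ x in Set.Ioi (1:ℝ), (fun x => G x ^ (1 - α)) x * (fun x => H x ^ α) x := by
      refine lintegral_mono_ae ?_
      filter_upwards [ae_restrict_mem measurableSet_Ioi] with x hx
      have hx1 : (1:ℝ) < x := hx
      have hx0 : 0 < x := lt_trans zero_lt_one hx1
      have hωa : 0 ≤ ω + a x := add_nonneg hω (ha_nonneg x)
      simp only [hG, hH]
      have hGnn : 0 ≤ x ^ (i - 1) * f x := mul_nonneg (Real.rpow_nonneg hx0.le _) (hf_nonneg x)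
      have hHnn : 0 ≤ x ^ i * (ω + a x) * f x :=
        mul_nonneg (mul_nonneg (Real.rpow_nonneg hx0.le _) hωa) (hf_nonneg x)
      rw [ENNReal.ofReal_rpow_of_nonneg hGnn (by linarith),
        ENNReal.ofReal_rpow_of_nonneg hHnn hα0.le,
        ← ENNReal.ofReal_mul (Real.rpow_nonneg hGnn _)]
      refine ENNReal.ofReal_le_ofReal ?_
      have hrhs : (x ^ (i - 1) * f x) ^ (1 - α) * (x ^ i * (ω + a x) * f x) ^ α
          = x ^ (i - 1 + α) * (ω + a x) ^ α * f x := by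
        rw [Real.mul_rpow (Real.rpow_nonneg hx0.le _) (hf_nonneg x),
          Real.mul_rpow (mul_nonneg (Real.rpow_nonneg hx0.le _) hωa) (hf_nonneg x),
          Real.mul_rpow (Real.rpow_nonneg hx0.le _) hωa]
        rw [← Real.rpow_mul hx0.le, ← Real.rpow_mul hx0.le]
        have hf1 : f x ^ (1 - α) * f x ^ α = f x := by
          rw [← Real.rpow_add' (hf_nonneg x) (by norm_num)]
          simp
        have hx2 : x ^ ((i - 1) * (1 - α)) * (x ^ (i * α) * (ω + a x) ^ α) =
            x ^ (i - 1 + α) * (ω + a x) ^ α := by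
          rw [← mul_assoc, ← Real.rpow_add hx0]
          have he : (i - 1) * (1 - α) + i * α = i - 1 + α := by ring
          rw [he]
        calc x ^ ((i - 1) * (1 - α)) * (f x ^ (1 - α)) *
              (x ^ (i * α) * (ω + a x) ^ α * f x ^ α)
            = x ^ ((i - 1) * (1 - α)) * (x ^ (i * α) * (ω + a x) ^ α) *
              (f x ^ (1 - α) * f x ^ α) := by ring
          _ = x ^ (i - 1 + α) * (ω + a x) ^ α * f x := by rw [hf1, hx2]
      rw [hrhs]
      have hxr : x ^ r ≤ x ^ (i - 1 + α) :=
        Real.rpow_le_rpow_of_exponent_le hx1.le (by linarith)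
      have : x ^ r * (ω + a x) ^ α ≤ x ^ (i - 1 + α) * (ω + a x) ^ α :=
        mul_le_mul_of_nonneg_right hxr (Real.rpow_nonneg hωa α)
      exact mul_le_mul_of_nonneg_right this (hf_nonneg x)
    refine hstep.trans ?_
    have hpq : Real.HolderConjugate (1 - α)⁻¹ α⁻¹ := by
      rw [Real.holderConjugate_iff]; constructor
      · rw [lt_inv_comm₀ zero_lt_one (by linarith)]
        · simpa using hα0
      · rw [inv_inv, inv_inv]; ring
    have hholder := ENNReal.lintegral_mul_le_Lp_mul_Lq
      (volume.restrict (Set.Ioi (1:ℝ))) hpq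
      ((hGm.pow_const (1 - α)).aemeasurable) ((hHm.pow_const α).aemeasurable)
    have h1α : (1 : ℝ) - α ≠ 0 := by linarith
    simp only [Pi.mul_apply] at hholder
    have e1 : ∀ x, (G x ^ (1 - α)) ^ (1 - α)⁻¹ = G x := fun x => by
      rw [← ENNReal.rpow_mul, mul_inv_cancel₀ h1α, ENNReal.rpow_one]
    have e2 : ∀ x, (H x ^ α) ^ α⁻¹ = H x := fun x => by
      rw [← ENNReal.rpow_mul, mul_inv_cancel₀ hα0.ne', ENNReal.rpow_one]
    simp only [e1, e2, one_div, inv_inv] at hholder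
    refine hholder.trans ?_
    exact mul_le_mul'
      (ENNReal.rpow_le_rpow (lintegral_mono_set (Set.Ioi_subset_Ioi zero_le_one)) (by linarith))
      (ENNReal.rpow_le_rpow (lintegral_mono_set (Set.Ioi_subset_Ioi zero_le_one)) hα0.le)
  exact add_le_add h1 h2
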